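/- There does not exist a continuous map φ : C(𝕀) → 𝕀 such that φ(f) is a fixed point of f (i.e., f(φ(f)) = φ(f)) for every f ∈ C(𝕀). -/
import Mathlib


open unitInterval

/-- The continuous family `(t, x) ↦ proj (x + t)`. -/
noncomputable def shiftFam : C(ℝ × I, I) :=
  ⟨fun p => Set.projIcc (0:ℝ) 1 zero_le_one ((p.2 : ℝ) + p.1), by
    apply Continuous.comp (continuous_projIcc)
    exact (continuous_subtype_val.comp continuous_snd).add continuous_fst⟩

lemma shift_fixed_pos {t : ℝ} (ht : 0 < t) {x : I}
    (hx : shiftFam.curry t x = x) : x = 1 := by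
  have h : max (0:ℝ) (min 1 ((x:ℝ) + t)) = (x:ℝ) := congrArg Subtype.val hx
  have hx0 : (0:ℝ) ≤ (x:ℝ) := x.2.1
  have hnn : (0:ℝ) ≤ min 1 ((x:ℝ) + t) := le_min zero_le_one (by linarith)
  rw [max_eq_right hnn] at h
  rcases min_cases (1:ℝ) ((x:ℝ) + t) with ⟨h1, h2⟩ | ⟨h1, h2⟩
  · exact Subtype.ext (by rw [h1] at h; rw [← h]; norm_num)
  · rw [h1] at h; linarith

lemma shift_fixed_neg {t : ℝ} (ht : t < 0) {x : I}
    (hx : shiftFam.curry t x = x) : x = 0 := by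
  have h : max (0:ℝ) (min 1 ((x:ℝ) + t)) = (x:ℝ) := congrArg Subtype.val hx
  have hx1 : (x:ℝ) ≤ 1 := x.2.2
  have hle : min 1 ((x:ℝ) + t) ≤ (x:ℝ) + t := min_le_right _ _
  rcases max_cases (0:ℝ) (min 1 ((x:ℝ) + t)) with ⟨h1, h2⟩ | ⟨h1, h2⟩
  · exact Subtype.ext (by rw [h1] at h; exact h.symm)
  · rw [h1] at h; linarith

/-- There is no continuous selection of fixed points: no continuous map `φ : C(I) → I`
satisfies `f(φ(f)) = φ(f)` for every `f ∈ C(I)`. -/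
theorem no_continuous_fixed_point_selection :
    ¬ ∃ φ : C(I, I) → I, Continuous φ ∧ ∀ f : C(I, I), f (φ f) = φ f := by
  rintro ⟨φ, hφ, hfix⟩
  set h : ℝ → ℝ := fun t => ((φ (shiftFam.curry t) : ℝ)) with hh
  have hcont : Continuous h := by
    exact continuous_subtype_val.comp (hφ.comp shiftFam.curry.continuous)
  have hpos : ∀ t > (0:ℝ), h t = 1 := fun t ht => by
    have := shift_fixed_pos ht (hfix (shiftFam.curry t))
    simp [hh, this]
  have hneg : ∀ t < (0:ℝ), h t = 0 := fun t ht => by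
    have := shift_fixed_neg ht (hfix (shiftFam.curry t))
    simp [hh, this]
  have l1 : Filter.Tendsto h (nhdsWithin 0 (Set.Ioi 0)) (nhds (h 0)) :=
    (hcont.tendsto 0).mono_left nhdsWithin_le_nhds
  have l1' : Filter.Tendsto h (nhdsWithin 0 (Set.Ioi 0)) (nhds 1) := by
    apply Filter.Tendsto.congr' _ tendsto_const_nhds
    filter_upwards [self_mem_nhdsWithin] with t ht
    exact (hpos t ht).symm
  have l2 : Filter.Tendsto h (nhdsWithin 0 (Set.Iio 0)) (nhds (h 0)) :=
    (hcont.tendsto 0).mono_left nhdsWithin_le_nhds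
  have l2' : Filter.Tendsto h (nhdsWithin 0 (Set.Iio 0)) (nhds 0) := by
    apply Filter.Tendsto.congr' _ tendsto_const_nhds
    filter_upwards [self_mem_nhdsWithin] with t ht
    exact (hneg t ht).symm
  have e1 : h 0 = 1 := tendsto_nhds_unique l1 l1'
  have e2 : h 0 = 0 := tendsto_nhds_unique l2 l2'
  rw [e1] at e2
  norm_num at e2
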